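/- arXiv:1708.09632 — 2 statements merged into one kernel-verified Lean document; each statement's English description precedes it below -/
import Mathlib

section
/- Let p : E → B be a Grothendieck fibration of categories, and suppose given a pullback square in B with sides f' : a' → b', α : a' → a, β : b' → b, f : a → b (so f α = β f'). If b̄' → b̄ is a morphism in E over β, ā → b̄ is a p-cartesian morphism over f, and ā' → b̄' is a p-cartesian morphism over f', then the induced commutative square in E (where the morphism ā' → ā is produced by the universal property of the cartesian morphism ā → b̄) is a pullback square in E. -/
open CategoryTheory

universe v₁ u₁ v₂ u₂

variable {E : Type u₁} [Category.{v₁} E] {B : Type u₂} [Category.{v₂} B]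

/-- A morphism `φ : x ⟶ y` of `E` is `p`-cartesian if for every `z` and every morphism
`h : z ⟶ y` whose image factors through `p.map φ` via `g`, there is a unique lift
`k : z ⟶ x` over `g` with `k ≫ φ = h`. -/
def IsCartesianMor (p : E ⥤ B) {x y : E} (φ : x ⟶ y) : Prop :=
  ∀ (z : E) (g : p.obj z ⟶ p.obj x) (h : z ⟶ y), p.map h = g ≫ p.map φ →
    ∃! k : z ⟶ x, p.map k = g ∧ k ≫ φ = h

/-- `p : E ⥤ B` is a Grothendieck fibration: every morphism of `B` with prescribed
target admits a cartesian lift. -/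
def IsGrothendieckFibration (p : E ⥤ B) : Prop :=
  ∀ (y : E) (a : B) (f : a ⟶ p.obj y),
    ∃ (x : E) (φ : x ⟶ y) (h : p.obj x = a),
      IsCartesianMor p φ ∧ p.map φ = eqToHom h ≫ f

/-- Let `p : E → B` be a Grothendieck fibration. Given a commutative square in `E`
whose image under `p` is a pullback square in `B`, such that the two morphisms lying
over the "backwards" maps are `p`-cartesian, the square is a pullback in `E`. -/
theorem cartesian_lift_pullback_square (p : E ⥤ B) (hp : IsGrothendieckFibration p)
    {abar' bbar' abar bbar : E}
    (αbar : abar' ⟶ abar) (fbar' : abar' ⟶ bbar') (fbar : abar ⟶ bbar) (βbar : bbar' ⟶ bbar)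
    (hsq : αbar ≫ fbar = fbar' ≫ βbar)
    (hbase : IsPullback (p.map αbar) (p.map fbar') (p.map fbar) (p.map βbar))
    (hf : IsCartesianMor p fbar) (hf' : IsCartesianMor p fbar') :
    IsPullback αbar fbar' fbar βbar := by
  have key : ∀ (z : E) (u : z ⟶ abar) (v : z ⟶ bbar'), u ≫ fbar = v ≫ βbar →
      ∃! k : z ⟶ abar', k ≫ αbar = u ∧ k ≫ fbar' = v := by
    intro z u v w
    have wB : p.map u ≫ p.map fbar = p.map v ≫ p.map βbar := by
      rw [← p.map_comp, ← p.map_comp, w]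
    set g := hbase.lift (p.map u) (p.map v) wB with hgdef
    have hg1 : g ≫ p.map αbar = p.map u := hbase.lift_fst _ _ _
    have hg2 : g ≫ p.map fbar' = p.map v := hbase.lift_snd _ _ _
    obtain ⟨k, ⟨hk1, hk2⟩, hkuniq⟩ := hf' z g v (by rw [← hg2])
    have hkα : k ≫ αbar = u := by
      obtain ⟨m, ⟨hm1, hm2⟩, hmuniq⟩ := hf z (p.map u) (u ≫ fbar) (by rw [p.map_comp])
      have e1 : u = m := hmuniq u ⟨rfl, rfl⟩
      have e2 : k ≫ αbar = m := hmuniq (k ≫ αbar) ⟨by rw [p.map_comp, hk1, hg1],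
        by rw [Category.assoc, hsq, ← Category.assoc, hk2, w]⟩
      rw [e2, ← e1]
    refine ⟨k, ⟨hkα, hk2⟩, fun k' ⟨hk'1, hk'2⟩ => ?_⟩
    refine hkuniq k' ⟨?_, hk'2⟩
    apply hbase.hom_ext
    · rw [← p.map_comp, hk'1, hg1]
    · rw [← p.map_comp, hk'2, hg2]
  refine IsPullback.of_isLimit' ⟨hsq⟩ ?_
  refine Limits.PullbackCone.IsLimit.mk hsq
    (fun s => (key s.pt s.fst s.snd s.condition).choose)
    (fun s => ((key s.pt s.fst s.snd s.condition).choose_spec.1).1)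
    (fun s => ((key s.pt s.fst s.snd s.condition).choose_spec.1).2)
    (fun s m hm1 hm2 => (key s.pt s.fst s.snd s.condition).choose_spec.2 m ⟨hm1, hm2⟩)
end

section
/- Let C be a category with pullbacks and let X : Δᵒᵖ → C be a category object (i.e. X satisfies the Segal condition: for every n, the canonical map X_n → X_1 ×_{X_0} ⋯ ×_{X_0} X_1 induced by the inert inclusions is an isomorphism). Then X_1 carries the structure of a monoid in the monoidal category Span(C) of isomorphism classes of spans (with monoidal structure given by the cartesian product of C): the multiplication is the span X_1 × X_1 ← X_2 → X_1 given by (X(d_2), X(d_0)) and X(d_1), the unit is the span * ← X_0 → X_1 given by X(s_0), and these satisfy the associativity and unit axioms for a monoid in Span(C). -/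
open CategoryTheory CategoryTheory.Limits Simplicial

universe v u

variable {C : Type u} [Category.{v} C]

/-- A span from `x` to `y` in `C`: a diagram `x ⟵ mid ⟶ y`. -/
structure SpanD (x y : C) where
  mid : C
  l : mid ⟶ x
  r : mid ⟶ y

/-- Two spans are isomorphic if there is an isomorphism of their middle objects
commuting with the legs. -/
def SpanEquiv {x y : C} (s t : SpanD x y) : Prop :=
  ∃ e : s.mid ≅ t.mid, e.hom ≫ t.l = s.l ∧ e.hom ≫ t.r = s.r

/-- The identity span `x ⟵ x ⟶ x`. -/
def idSpan (x : C) : SpanD x x := ⟨x, 𝟙 x, 𝟙 x⟩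

/-- Composition of spans by pullback. -/
noncomputable def compSpan [HasPullbacks C] {x y z : C} (s : SpanD x y) (t : SpanD y z) :
    SpanD x z :=
  ⟨pullback s.r t.l, pullback.fst s.r t.l ≫ s.l, pullback.snd s.r t.l ≫ t.r⟩

/-- The product of two spans, for the monoidal structure on `Span(C)` induced by the
cartesian product of `C`. -/
noncomputable def prodSpan [HasBinaryProducts C] {x y x' y' : C}
    (s : SpanD x y) (t : SpanD x' y') : SpanD (x ⨯ x') (y ⨯ y') :=
  ⟨s.mid ⨯ t.mid, prod.map s.l t.l, prod.map s.r t.r⟩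

/-- The span associated to an isomorphism. -/
def isoSpan {x y : C} (e : x ≅ y) : SpanD x y := ⟨x, 𝟙 x, e.hom⟩

/-- The axioms for `(X1, m, u)` to be a monoid object in the monoidal category `Span(C)`
of isomorphism classes of spans in `C` under the cartesian product: associativity and the
two unit laws, up to isomorphism of spans. -/
noncomputable def IsMonoidInSpan [HasFiniteLimits C] (X1 : C)
    (m : SpanD (X1 ⨯ X1) X1) (u : SpanD (⊤_ C) X1) : Prop :=
  SpanEquiv (compSpan (prodSpan m (idSpan X1)) m)
      (compSpan (isoSpan (prod.associator X1 X1 X1)) (compSpan (prodSpan (idSpan X1) m) m)) ∧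
  SpanEquiv (compSpan (prodSpan u (idSpan X1)) m) (isoSpan (prod.leftUnitor X1)) ∧
  SpanEquiv (compSpan (prodSpan (idSpan X1) u) m) (isoSpan (prod.rightUnitor X1))

/-- The multiplication span `X_1 ⨯ X_1 ⟵ X_2 ⟶ X_1` of a simplicial object,
with left leg `(X(d_2), X(d_0))` and right leg `X(d_1)`. -/
noncomputable def mulSpan [HasBinaryProducts C] (X : SimplicialObject C) :
    SpanD (X _⦋1⦌ ⨯ X _⦋1⦌) (X _⦋1⦌) :=
  ⟨X _⦋2⦌, prod.lift (X.δ 2) (X.δ 0), X.δ 1⟩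

/-- The unit span `* ⟵ X_0 ⟶ X_1` of a simplicial object, with right leg `X(s_0)`. -/
noncomputable def unitSpan [HasTerminal C] (X : SimplicialObject C) :
    SpanD (⊤_ C) (X _⦋1⦌) :=
  ⟨X _⦋0⦌, terminal.from _, X.σ 0⟩


namespace SegalHelpers

/-- The inert inclusion `⦋n⦌ ↪ [n+1]` onto `{0,…,n}`. -/
def initialSeg (n : ℕ) : (⦋n⦌ : SimplexCategory) ⟶ ⦋n + 1⦌ :=
  SimplexCategory.mkHom ⟨fun i => i.castSucc, fun a b h => by simpa using h⟩

/-- The inert inclusion `⦋1⦌ ↪ [n+1]` onto the last edge `{n, n+1}`. -/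
def lastEdge (n : ℕ) : (⦋1⦌ : SimplexCategory) ⟶ ⦋n + 1⦌ :=
  SimplexCategory.mkHom ⟨fun j => ⟨n + j.1, by have := j.isLt; omega⟩,
    fun a b h => by simp only [Fin.mk_le_mk]; have : a.1 ≤ b.1 := h; omega⟩

/-- The inclusion of the last vertex `⦋0⦌ → ⦋n⦌`. -/
def lastVertex (n : ℕ) : (⦋0⦌ : SimplexCategory) ⟶ ⦋n⦌ :=
  SimplexCategory.mkHom ⟨fun _ => Fin.last n, fun _ _ _ => le_refl _⟩

/-- The inclusion of the first vertex `⦋0⦌ → ⦋n⦌`. -/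
def firstVertex (n : ℕ) : (⦋0⦌ : SimplexCategory) ⟶ ⦋n⦌ :=
  SimplexCategory.mkHom ⟨fun _ => 0, fun _ _ _ => le_refl _⟩

/-- The inert inclusion `ρ_i : ⦋1⦌ ↪ ⦋n⦌` onto `{i, i+1}` (for `i : Fin n`). -/
def inert (n : ℕ) (i : Fin n) : (⦋1⦌ : SimplexCategory) ⟶ ⦋n⦌ :=
  SimplexCategory.mkHom ⟨fun j => ⟨i.1 + j.1, by have := i.isLt; have := j.isLt; omega⟩,
    fun a b h => by simp only [Fin.mk_le_mk]; have : a.1 ≤ b.1 := h; omega⟩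

variable {n m : ℕ}

/-- A map in the simplex category is active if it preserves the endpoints. -/
def IsActiveHom (φ : (⦋n⦌ : SimplexCategory) ⟶ ⦋m⦌) : Prop :=
  φ.toOrderHom 0 = 0 ∧ φ.toOrderHom (Fin.last n) = Fin.last m

/-- The length `φ(i) − φ(i−1)` of the `i`-th block of `φ`. -/
def blockLen (φ : (⦋n⦌ : SimplexCategory) ⟶ ⦋m⦌) (i : Fin n) : ℕ :=
  (φ.toOrderHom i.succ).1 - (φ.toOrderHom i.castSucc).1

/-- The inclusion `[φ(i) − φ(i−1)] → ⦋m⦌` onto the interval `{φ(i−1), …, φ(i)}`. -/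
def restr (φ : (⦋n⦌ : SimplexCategory) ⟶ ⦋m⦌) (i : Fin n) :
    (⦋blockLen φ i⦌ : SimplexCategory) ⟶ ⦋m⦌ :=
  SimplexCategory.mkHom ⟨fun j => ⟨(φ.toOrderHom i.castSucc).1 + j.1, by
      have h1 : (φ.toOrderHom i.castSucc).1 ≤ (φ.toOrderHom i.succ).1 :=
        φ.toOrderHom.monotone (Fin.castSucc_le_succ i)
      have h2 := (φ.toOrderHom i.succ).isLt
      have h3 := j.isLt
      simp only [blockLen] at h3
      simp only [SimplexCategory.len_mk] at *
      omega⟩,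
    fun a b h => by simp only [Fin.mk_le_mk]; have : a.1 ≤ b.1 := h; omega⟩

/-- The active map `⦋1⦌ → [φ(i) − φ(i−1)]` hitting the endpoints. -/
def activeEdge (φ : (⦋n⦌ : SimplexCategory) ⟶ ⦋m⦌) (i : Fin n) :
    (⦋1⦌ : SimplexCategory) ⟶ ⦋blockLen φ i⦌ :=
  SimplexCategory.mkHom ⟨fun j => ⟨j.1 * blockLen φ i, by
      have hj := j.isLt
      have : j.1 * blockLen φ i ≤ 1 * blockLen φ i := Nat.mul_le_mul_right _ (by omega)
      omega⟩,
    fun a b h => by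
      simp only [Fin.mk_le_mk]
      exact Nat.mul_le_mul_right _ h⟩

variable {C : Type u} [Category.{v} C]

/-- The Segal condition for a simplicial object: for every `n` the square expressing
`X_{n+1} ≅ X_n ×_{X_0} X_1` (restriction to `{0,…,n}` and to the last edge) is a
pullback.  By induction this is equivalent to the usual iterated fiber product
condition `X_n ≅ X_1 ×_{X_0} ⋯ ×_{X_0} X_1`. -/
def SegalCond (X : CategoryTheory.SimplicialObject C) : Prop :=
  ∀ n : ℕ, IsPullback
    (X.map (initialSeg n).op) (X.map (lastEdge (n := n)).op)
    (X.map (lastVertex n).op) (X.map (firstVertex 1).op)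

/-- The 2-Segal (decomposition) condition: for every active `φ : ⦋n⦌ → ⦋m⦌` the square
expressing `X_m ≅ X_n ×_{∏ᵢ X_1} ∏ᵢ X_{φ(i)−φ(i−1)}` is a pullback. -/
def TwoSegalCond [HasFiniteLimits C] (X : CategoryTheory.SimplicialObject C) : Prop :=
  ∀ (n m : ℕ) (φ : (⦋n⦌ : SimplexCategory) ⟶ ⦋m⦌), IsActiveHom φ →
    IsPullback
      (X.map φ.op)
      (Pi.lift fun i : Fin n => X.map (restr φ i).op)
      (Pi.lift fun i : Fin n => X.map (inert n i).op)
      (Limits.Pi.map fun i : Fin n => X.map (activeEdge φ i).op)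

end SegalHelpers


set_option linter.unusedSectionVars false
namespace SpanMonoidProof
open SegalHelpers

lemma shom_ext {m n : SimplexCategory} (f g : m ⟶ n)
    (h : ∀ i, f.toOrderHom i = g.toOrderHom i) : f = g := by
  apply SimplexCategory.Hom.ext
  exact OrderHom.ext _ _ (funext h)

variable {C : Type u} [Category.{v} C]

lemma map_comp' (X : CategoryTheory.SimplicialObject C)
    {a b c : SimplexCategory} (f : a ⟶ b) (g : b ⟶ c) :
    X.map g.op ≫ X.map f.op = X.map (f ≫ g).op := by
  rw [← X.map_comp]; rfl

lemma comp_eq_comp (X : CategoryTheory.SimplicialObject C)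
    {a b b' c : SimplexCategory} (f : a ⟶ b) (g : b ⟶ c) (f' : a ⟶ b') (g' : b' ⟶ c)
    (w : f ≫ g = f' ≫ g') : X.map g.op ≫ X.map f.op = X.map g'.op ≫ X.map f'.op := by
  rw [map_comp', map_comp', w]

lemma comp_eq_single (X : CategoryTheory.SimplicialObject C)
    {a b c : SimplexCategory} (f : a ⟶ b) (g : b ⟶ c) (h : a ⟶ c)
    (w : f ≫ g = h) : X.map g.op ≫ X.map f.op = X.map h.op := by
  rw [map_comp', w]

lemma comp_eq_id (X : CategoryTheory.SimplicialObject C)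
    {a b : SimplexCategory} (f : a ⟶ b) (g : b ⟶ a)
    (w : f ≫ g = 𝟙 a) : X.map g.op ≫ X.map f.op = 𝟙 _ := by
  rw [map_comp', w]; exact X.map_id _

lemma comp3_eq_comp3 (X : CategoryTheory.SimplicialObject C)
    {a b c b' c' d : SimplexCategory} (f : a ⟶ b) (g : b ⟶ c) (h : c ⟶ d)
    (f' : a ⟶ b') (g' : b' ⟶ c') (h' : c' ⟶ d)
    (w : f ≫ g ≫ h = f' ≫ g' ≫ h') :
    (X.map h.op ≫ X.map g.op) ≫ X.map f.op = X.map h'.op ≫ X.map g'.op ≫ X.map f'.op := by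
  rw [map_comp' X g h, map_comp' X f (g ≫ h), map_comp' X f' g',
    map_comp' X (f' ≫ g') h']
  congr 1
  rw [w, Category.assoc]

/-- Pullback of `prod.map f (𝟙 W)` and `prod.lift g h` reduces to the pullback of `f` and `g`. -/
lemma prodPB_left [HasFiniteLimits C] {P A B Z W : C} {p : P ⟶ A} {q : P ⟶ B}
    {f : A ⟶ Z} {g : B ⟶ Z} (hpb : IsPullback p q f g) (h : B ⟶ W) :
    IsPullback (prod.lift p (q ≫ h)) q (prod.map f (𝟙 W)) (prod.lift g h) := by
  have comm : prod.lift p (q ≫ h) ≫ prod.map f (𝟙 W) = q ≫ prod.lift g h := by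
    apply Limits.prod.hom_ext <;> simp [hpb.w]
  refine IsPullback.of_isLimit' ⟨comm⟩ (PullbackCone.IsLimit.mk _ ?_ ?_ ?_ ?_)
  · intro s
    refine hpb.lift (s.fst ≫ prod.fst) s.snd ?_
    have h1 := congrArg (· ≫ (prod.fst : Z ⨯ W ⟶ Z)) s.condition
    simpa [prod.lift_fst, prod.lift_snd] using h1
  · intro s
    apply Limits.prod.hom_ext
    · simp [prod.lift_fst, prod.lift_snd]
    · have := congrArg (· ≫ (prod.snd : Z ⨯ W ⟶ W)) s.condition
      simp [prod.lift_fst, prod.lift_snd] at this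
      simp [prod.lift_fst, prod.lift_snd, this]
  · intro s; simp
  · intro s m h1 h2
    apply hpb.hom_ext
    · have := congrArg (· ≫ (prod.fst : A ⨯ W ⟶ A)) h1
      simpa [prod.lift_fst, prod.lift_snd] using this
    · simp [h2]

/-- Pullback of `prod.map (𝟙 W) f` and `prod.lift h g` reduces to the pullback of `f` and `g`. -/
lemma prodPB_right [HasFiniteLimits C] {P A B Z W : C} {p : P ⟶ A} {q : P ⟶ B}
    {f : A ⟶ Z} {g : B ⟶ Z} (hpb : IsPullback p q f g) (h : B ⟶ W) :
    IsPullback (prod.lift (q ≫ h) p) q (prod.map (𝟙 W) f) (prod.lift h g) := by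
  have comm : prod.lift (q ≫ h) p ≫ prod.map (𝟙 W) f = q ≫ prod.lift h g := by
    apply Limits.prod.hom_ext <;> simp [hpb.w]
  refine IsPullback.of_isLimit' ⟨comm⟩ (PullbackCone.IsLimit.mk _ ?_ ?_ ?_ ?_)
  · intro s
    refine hpb.lift (s.fst ≫ prod.snd) s.snd ?_
    have h1 := congrArg (· ≫ (prod.snd : W ⨯ Z ⟶ Z)) s.condition
    simpa [prod.lift_fst, prod.lift_snd] using h1
  · intro s
    apply Limits.prod.hom_ext
    · have := congrArg (· ≫ (prod.fst : W ⨯ Z ⟶ W)) s.condition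
      simp [prod.lift_fst, prod.lift_snd] at this
      simp [prod.lift_fst, prod.lift_snd, this]
    · simp [prod.lift_fst, prod.lift_snd]
  · intro s; simp
  · intro s m h1 h2
    apply hpb.hom_ext
    · have := congrArg (· ≫ (prod.snd : W ⨯ A ⟶ A)) h1
      simpa [prod.lift_fst, prod.lift_snd] using this
    · simp [h2]

section
variable [HasFiniteLimits C] (X : CategoryTheory.SimplicialObject C) (hX : SegalCond X)

/- simplicial identities in `C`, as composites of face and degeneracy maps -/
lemma i1 : X.δ (1 : Fin 4) ≫ X.δ (2 : Fin 3) = X.δ (3 : Fin 4) ≫ X.δ (1 : Fin 3) :=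
  comp_eq_comp X _ _ _ _ (by apply shom_ext; intro i; fin_cases i <;> rfl)

lemma i5 : X.δ (2 : Fin 4) ≫ X.δ (2 : Fin 3) = X.δ (3 : Fin 4) ≫ X.δ (2 : Fin 3) :=
  comp_eq_comp X _ _ _ _ (by apply shom_ext; intro i; fin_cases i <;> rfl)

lemma i6 : X.δ (0 : Fin 4) ≫ X.δ (2 : Fin 3) = X.δ (3 : Fin 4) ≫ X.δ (0 : Fin 3) :=
  comp_eq_comp X _ _ _ _ (by apply shom_ext; intro i; fin_cases i <;> rfl)

lemma i7 : X.δ (0 : Fin 4) ≫ X.δ (0 : Fin 3) = X.map (lastEdge 2).op :=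
  comp_eq_single X _ _ _ (by apply shom_ext; intro i; fin_cases i <;> rfl)

lemma i8 : X.δ (1 : Fin 4) ≫ X.δ (0 : Fin 3) = X.map (lastEdge 2).op :=
  comp_eq_single X _ _ _ (by apply shom_ext; intro i; fin_cases i <;> rfl)

lemma i9 : X.δ (1 : Fin 3) ≫ X.map (lastVertex 1).op = X.map (lastVertex 2).op :=
  comp_eq_single X _ _ _ (by apply shom_ext; intro i; fin_cases i <;> rfl)

lemma i10 : X.δ (2 : Fin 4) ≫ X.δ (0 : Fin 3) = X.δ (0 : Fin 4) ≫ X.δ (1 : Fin 3) :=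
  comp_eq_comp X _ _ _ _ (by apply shom_ext; intro i; fin_cases i <;> rfl)

lemma i12 : X.δ (1 : Fin 4) ≫ X.δ (1 : Fin 3) = X.δ (2 : Fin 4) ≫ X.δ (1 : Fin 3) :=
  comp_eq_comp X _ _ _ _ (by apply shom_ext; intro i; fin_cases i <;> rfl)

lemma i2 : X.δ (1 : Fin 3) ≫ X.map (firstVertex 1).op
    = X.δ (2 : Fin 3) ≫ X.map (firstVertex 1).op :=
  comp_eq_comp X _ _ _ _ (by apply shom_ext; intro i; fin_cases i <;> rfl)

lemma i3 : X.δ (0 : Fin 3) ≫ X.map (lastVertex 1).op = X.map (lastVertex 2).op :=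
  comp_eq_single X _ _ _ (by apply shom_ext; intro i; fin_cases i <;> rfl)

lemma j1 : X.map (firstVertex 1).op ≫ X.σ (0 : Fin 1) = X.σ (0 : Fin 2) ≫ X.δ (2 : Fin 3) :=
  comp_eq_comp X _ _ _ _ (by apply shom_ext; intro i; fin_cases i <;> rfl)

lemma j2 : X.σ (0 : Fin 2) ≫ X.δ (0 : Fin 3) = 𝟙 _ :=
  comp_eq_id X _ _ (by apply shom_ext; intro i; fin_cases i <;> rfl)

lemma j3 : X.σ (0 : Fin 2) ≫ X.δ (1 : Fin 3) = 𝟙 _ :=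
  comp_eq_id X _ _ (by apply shom_ext; intro i; fin_cases i <;> rfl)

lemma j4 : X.σ (0 : Fin 1) ≫ X.map (lastVertex 1).op = 𝟙 _ :=
  comp_eq_id X _ _ (by apply shom_ext; intro i; fin_cases i <;> rfl)

lemma j10 : X.σ (0 : Fin 1) ≫ X.map (firstVertex 1).op = 𝟙 _ :=
  comp_eq_id X _ _ (by apply shom_ext; intro i; fin_cases i <;> rfl)

lemma j7 : X.map (lastVertex 1).op ≫ X.σ (0 : Fin 1) = X.σ (1 : Fin 2) ≫ X.δ (0 : Fin 3) :=
  comp_eq_comp X _ _ _ _ (by apply shom_ext; intro i; fin_cases i <;> rfl)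

lemma j8 : X.σ (1 : Fin 2) ≫ X.δ (2 : Fin 3) = 𝟙 _ :=
  comp_eq_id X _ _ (by apply shom_ext; intro i; fin_cases i <;> rfl)

lemma j9 : X.σ (1 : Fin 2) ≫ X.δ (1 : Fin 3) = 𝟙 _ :=
  comp_eq_id X _ _ (by apply shom_ext; intro i; fin_cases i <;> rfl)

include hX

/-- The Segal square `X₂ ≅ X₁ ×_{X₀} X₁`, in terms of face maps. -/
lemma S1 : IsPullback (X.δ (2 : Fin 3)) (X.δ (0 : Fin 3))
    (X.map (lastVertex 1).op) (X.map (firstVertex 1).op) := by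
  have e1 : initialSeg 1 = SimplexCategory.δ 2 := by
    apply shom_ext; intro i; fin_cases i <;> rfl
  have e2 : lastEdge 1 = SimplexCategory.δ 0 := by
    apply shom_ext; intro i; fin_cases i <;> rfl
  have h := hX 1
  rw [e1, e2] at h
  exact h

/-- The Segal square `X₃ ≅ X₂ ×_{X₀} X₁`, in terms of face maps. -/
lemma S2 : IsPullback (X.δ (3 : Fin 4)) (X.map (lastEdge 2).op)
    (X.map (lastVertex 2).op) (X.map (firstVertex 1).op) := by
  have e1 : initialSeg 2 = SimplexCategory.δ 3 := by
    apply shom_ext; intro i; fin_cases i <;> rfl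
  have h := hX 2
  rw [e1] at h
  exact h

/-- `X₃ = X₂ ×_{X₁} X₂` via `(δ₃, δ₁)` over `(δ₁, δ₂)`. -/
lemma pbA : IsPullback (X.δ (3 : Fin 4)) (X.δ (1 : Fin 4))
    (X.δ (1 : Fin 3)) (X.δ (2 : Fin 3)) := by
  have big : IsPullback (X.δ (1 : Fin 4) ≫ X.δ (0 : Fin 3)) (X.δ (3 : Fin 4))
      (X.map (firstVertex 1).op) (X.δ (1 : Fin 3) ≫ X.map (lastVertex 1).op) := by
    rw [i8, i9]
    exact (S2 X hX).flip
  exact (IsPullback.of_right big (i1 X) (S1 X hX).flip).flip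

set_option maxHeartbeats 1600000 in
/-- `X₃ = X₁ ×_{X₀} X₂` via `(δ₂≫δ₂, δ₀)`. -/
lemma pbL2 : IsPullback (X.δ (2 : Fin 4) ≫ X.δ (2 : Fin 3)) (X.δ (0 : Fin 4))
    (X.map (lastVertex 1).op) (X.δ (1 : Fin 3) ≫ X.map (firstVertex 1).op) := by
  have s1 := S1 X hX
  have s2 := S2 X hX
  have comm : (X.δ (2 : Fin 4) ≫ X.δ (2 : Fin 3)) ≫ X.map (lastVertex 1).op
      = X.δ (0 : Fin 4) ≫ X.δ (1 : Fin 3) ≫ X.map (firstVertex 1).op :=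
    comp3_eq_comp3 X _ _ _ _ _ _ (by apply shom_ext; intro i; fin_cases i <;> rfl)
  refine IsPullback.of_isLimit' ⟨comm⟩ (PullbackCone.IsLimit.mk _ ?_ ?_ ?_ ?_)
  · intro s
    refine s2.lift (s1.lift s.fst (s.snd ≫ X.δ 2) ?c1) (s.snd ≫ X.δ 0) ?c2
    case c1 =>
      rw [s.condition, Category.assoc, ← i2]
    case c2 =>
      rw [← i3, ← Category.assoc, s1.lift_snd, Category.assoc, s1.w, Category.assoc]
  · intro s
    rw [i5, ← Category.assoc, s2.lift_fst, s1.lift_fst]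
  · intro s
    apply s1.hom_ext
    · rw [Category.assoc, i6, ← Category.assoc, s2.lift_fst, s1.lift_snd]
    · rw [Category.assoc, i7, s2.lift_snd]
  · intro s m h1 h2
    apply s2.hom_ext
    · rw [s2.lift_fst]
      apply s1.hom_ext
      · rw [Category.assoc, ← i5, h1, s1.lift_fst]
      · rw [Category.assoc, ← i6, ← Category.assoc, h2, s1.lift_snd]
    · rw [s2.lift_snd, ← i7, ← Category.assoc, h2]

/-- `X₃ = X₂ ×_{X₁} X₂` via `(δ₀, δ₂)` over `(δ₁, δ₀)`. -/
lemma pbB : IsPullback (X.δ (0 : Fin 4)) (X.δ (2 : Fin 4))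
    (X.δ (1 : Fin 3)) (X.δ (0 : Fin 3)) :=
  (IsPullback.of_right (pbL2 X hX) (i10 X) (S1 X hX)).flip

/-- `X₁ = X₀ ×_{X₁} X₂` via `(v₀, σ₀)`: the left unit square. -/
lemma pbUL : IsPullback (X.map (firstVertex 1).op) (X.σ (0 : Fin 2))
    (X.σ (0 : Fin 1)) (X.δ (2 : Fin 3)) := by
  have s1 := S1 X hX
  refine IsPullback.of_isLimit' ⟨j1 X⟩ (PullbackCone.IsLimit.mk _ ?_ ?_ ?_ ?_)
  · intro s
    exact s.snd ≫ X.δ 0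
  · intro s
    rw [Category.assoc, ← s1.w, ← Category.assoc, ← s.condition, Category.assoc, j4 X,
      Category.comp_id]
  · intro s
    have hfl : (s.snd ≫ X.δ 0) ≫ X.map (firstVertex 1).op = s.fst := by
      rw [Category.assoc, ← s1.w, ← Category.assoc, ← s.condition, Category.assoc, j4 X,
        Category.comp_id]
    apply s1.hom_ext
    · rw [Category.assoc, ← j1 X, ← Category.assoc, hfl, s.condition]
    · rw [Category.assoc, j2 X, Category.comp_id]
  · intro s m h1 h2
    rw [← h2, Category.assoc, j2 X, Category.comp_id]

/-- `X₁ = X₀ ×_{X₁} X₂` via `(v_last, σ₁)`: the right unit square. -/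
lemma pbUR : IsPullback (X.map (lastVertex 1).op) (X.σ (1 : Fin 2))
    (X.σ (0 : Fin 1)) (X.δ (0 : Fin 3)) := by
  have s1 := S1 X hX
  refine IsPullback.of_isLimit' ⟨j7 X⟩ (PullbackCone.IsLimit.mk _ ?_ ?_ ?_ ?_)
  · intro s
    exact s.snd ≫ X.δ 2
  · intro s
    rw [Category.assoc, s1.w, ← Category.assoc, ← s.condition, Category.assoc, j10 X,
      Category.comp_id]
  · intro s
    have hfl : (s.snd ≫ X.δ 2) ≫ X.map (lastVertex 1).op = s.fst := by
      rw [Category.assoc, s1.w, ← Category.assoc, ← s.condition, Category.assoc, j10 X,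
        Category.comp_id]
    apply s1.hom_ext
    · rw [Category.assoc, j8 X, Category.comp_id]
    · rw [Category.assoc, ← j7 X, ← Category.assoc, hfl, s.condition]
  · intro s m h1 h2
    rw [← h2, Category.assoc, j8 X, Category.comp_id]

end
end SpanMonoidProof

open SegalHelpers in
/-- If `X` is a category object (Segal object) in a category `C` with finite limits, then
`X_1` with the multiplication span `X_1 ⨯ X_1 ⟵ X_2 ⟶ X_1` and the unit span
`* ⟵ X_0 ⟶ X_1` is a monoid in the monoidal category of spans `Span(C)`. -/
theorem segal_object_monoid_in_span (C : Type u) [Category.{v} C] [HasFiniteLimits C]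
    (X : CategoryTheory.SimplicialObject C) (hX : SegalCond X) :
    IsMonoidInSpan (X _⦋1⦌) (mulSpan X) (unitSpan X) := by
  open SpanMonoidProof in
  refine ⟨?_, ?_, ?_⟩
  · -- associativity
    have hL := prodPB_left (pbA X hX) (X.δ 0)
    have hR := prodPB_right (pbB X hX) (X.δ 2)
    dsimp only [SpanEquiv, compSpan, prodSpan, idSpan, isoSpan, mulSpan]
    set α := prod.associator (X _⦋1⦌) (X _⦋1⦌) (X _⦋1⦌) with hα
    set iL := pullback.fst (prod.map (𝟙 (X _⦋1⦌)) (X.δ 1)) (prod.lift (X.δ 2) (X.δ 0)) ≫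
      prod.map (𝟙 (X _⦋1⦌)) (prod.lift (X.δ 2) (X.δ 0)) with hiL
    have hIso : IsPullback (iL ≫ α.inv) (𝟙 _) α.hom iL := by
      refine (IsPullback.of_horiz_isIso ⟨?_⟩).flip
      simp
    refine ⟨hL.isoPullback.symm ≪≫ hR.isoPullback ≪≫ hIso.isoPullback, ?_, ?_⟩
    · rw [Iso.trans_hom, Iso.trans_hom, Iso.symm_hom, Category.assoc, Iso.inv_comp_eq]
      simp only [Category.assoc, Category.comp_id]
      rw [hIso.isoPullback_hom_fst, hiL]
      simp only [Category.assoc]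
      rw [reassoc_of% hR.isoPullback_hom_fst, reassoc_of% hL.isoPullback_hom_fst]
      apply Limits.prod.hom_ext
      · apply Limits.prod.hom_ext <;>
          simp [prod.lift_fst, prod.lift_snd, prod.lift_fst_assoc, prod.lift_snd_assoc, hα, i5 X, i6 X]
      · simp [prod.lift_fst, prod.lift_snd, prod.lift_fst_assoc, prod.lift_snd_assoc, hα, i7 X, i8 X]
    · rw [Iso.trans_hom, Iso.trans_hom, Iso.symm_hom, Category.assoc, Iso.inv_comp_eq]
      simp only [Category.assoc]
      rw [reassoc_of% hIso.isoPullback_hom_snd,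
        reassoc_of% hR.isoPullback_hom_snd, reassoc_of% hL.isoPullback_hom_snd]
      exact (i12 X).symm
  · -- left unit
    have hU := prodPB_left (pbUL X hX) (X.δ 0)
    rw [j2 X] at hU
    dsimp only [SpanEquiv, compSpan, prodSpan, idSpan, isoSpan, mulSpan, unitSpan]
    refine ⟨hU.isoPullback.symm ≪≫ (prod.leftUnitor (X _⦋1⦌)).symm, ?_, ?_⟩
    · rw [Iso.trans_hom, Iso.symm_hom, Iso.symm_hom, Category.assoc, Category.comp_id,
        Iso.inv_comp_eq, ← Category.assoc, hU.isoPullback_hom_fst]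
      apply Limits.prod.hom_ext
      · exact Subsingleton.elim _ _
      · simp
    · rw [Iso.trans_hom, Iso.symm_hom, Iso.symm_hom, Category.assoc, Iso.inv_comp_eq]
      have : hU.isoPullback.hom ≫
          pullback.snd (prod.map (X.σ 0) (𝟙 (X _⦋1⦌))) (prod.lift (X.δ 2) (X.δ 0)) ≫ X.δ 1
          = 𝟙 _ := by
        rw [← Category.assoc, hU.isoPullback_hom_snd, j3 X]
      rw [this]
      exact (prod.leftUnitor (X _⦋1⦌)).inv_hom_id
  · -- right unit
    have hU := prodPB_right (pbUR X hX) (X.δ 2)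
    rw [j8 X] at hU
    dsimp only [SpanEquiv, compSpan, prodSpan, idSpan, isoSpan, mulSpan, unitSpan]
    refine ⟨hU.isoPullback.symm ≪≫ (prod.rightUnitor (X _⦋1⦌)).symm, ?_, ?_⟩
    · rw [Iso.trans_hom, Iso.symm_hom, Iso.symm_hom, Category.assoc, Category.comp_id,
        Iso.inv_comp_eq, ← Category.assoc, hU.isoPullback_hom_fst]
      apply Limits.prod.hom_ext
      · simp
      · exact Subsingleton.elim _ _
    · rw [Iso.trans_hom, Iso.symm_hom, Iso.symm_hom, Category.assoc, Iso.inv_comp_eq]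
      have : hU.isoPullback.hom ≫
          pullback.snd (prod.map (𝟙 (X _⦋1⦌)) (X.σ 0)) (prod.lift (X.δ 2) (X.δ 0)) ≫ X.δ 1
          = 𝟙 _ := by
        rw [← Category.assoc, hU.isoPullback_hom_snd, j9 X]
      rw [this]
      exact (prod.rightUnitor (X _⦋1⦌)).inv_hom_id
end
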